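/- Extension lemma: Let G = (V, F) be an S(k-2, k-1, n) Steiner system and H = (V, E) a chain-connected k-uniform extension of G (every edge of H contains an edge of G) that contains no mutually extended edges. Then H is a k-uniform 2-hypertree. -/

import Mathlib

variable {V : Type*} [DecidableEq V]

/-- The list of consecutive `k`-windows (as finsets) of a vertex sequence. -/
def windows (k : ℕ) (w : List V) : List (Finset V) :=
  (List.range (w.length + 1 - k)).map fun i => ((w.drop i).take k).toFinset

/-- `w` is the vertex sequence of a chain: `v₁ ≠ v_l`, each window is a `k`-set,
and the `l - k + 1` window edges are pairwise distinct. -/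
def IsChainSeq (k : ℕ) (w : List V) : Prop :=
  k ≤ w.length ∧ w.head? ≠ w.getLast? ∧
  (∀ e ∈ windows k w, e.card = k) ∧ (windows k w).Nodup

/-- `w` is the vertex sequence of a semicycle: `v₁ = v_l`, each window is a `k`-set,
and the `l - k + 1` window edges are pairwise distinct. -/
def IsSemicycleSeq (k : ℕ) (w : List V) : Prop :=
  k ≤ w.length ∧ w.head? = w.getLast? ∧
  (∀ e ∈ windows k w, e.card = k) ∧ (windows k w).Nodup

/-- A hypergraph with edge set `E` contains no semicycle as a subhypergraph. -/
def SemicycleFree (k : ℕ) (E : Finset (Finset V)) : Prop :=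
  ¬ ∃ w : List V, IsSemicycleSeq k w ∧ ∀ e ∈ windows k w, e ∈ E

/-- Every two distinct vertices of `S` lie in a common chain subhypergraph of `E`. -/
def ChainConnOn (k : ℕ) (S : Finset V) (E : Finset (Finset V)) : Prop :=
  ∀ u ∈ S, ∀ v ∈ S, u ≠ v →
    ∃ w : List V, IsChainSeq k w ∧ (∀ e ∈ windows k w, e ∈ E) ∧ u ∈ w ∧ v ∈ w

/-- Chain-connectedness on the whole (finite) vertex type. -/
def ChainConn [Fintype V] (k : ℕ) (E : Finset (Finset V)) : Prop :=
  ChainConnOn k Finset.univ E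

/-- A `k`-uniform hypertree: chain-connected and semicycle-free. -/
def IsHypertree [Fintype V] (k : ℕ) (E : Finset (Finset V)) : Prop :=
  (∀ e ∈ E, e.card = k) ∧ ChainConn k E ∧ SemicycleFree k E

/-- Every chain subhypergraph of `E` has length (number of edges) at most `l`. -/
def ChainsLenLE (k l : ℕ) (E : Finset (Finset V)) : Prop :=
  ∀ w : List V, IsChainSeq k w → (∀ e ∈ windows k w, e ∈ E) →
    w.length + 1 - k ≤ l

/-- An `l`-hypertree: a hypertree all of whose chains have length at most `l`. -/
def IsLHypertree [Fintype V] (k l : ℕ) (E : Finset (Finset V)) : Prop :=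
  IsHypertree k E ∧ ChainsLenLE k l E

/-- Edge-minimal: deleting any edge destroys chain-connectedness. -/
def EdgeMinimal [Fintype V] (k : ℕ) (E : Finset (Finset V)) : Prop :=
  ∀ e ∈ E, ¬ ChainConn k (E.erase e)

/-- Edge-maximal: adding any new `k`-set as an edge creates a semicycle. -/
def EdgeMaximal [Fintype V] (k : ℕ) (E : Finset (Finset V)) : Prop :=
  ∀ s : Finset V, s.card = k → s ∉ E → ¬ SemicycleFree k (insert s E)

/-- `S` is a (tight) star subhypergraph of `E`: a nonempty set of edges of `E`
all containing a common `(k-1)`-set kernel. -/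
def IsStarSub (k : ℕ) (E S : Finset (Finset V)) : Prop :=
  S ⊆ E ∧ S.Nonempty ∧ ∃ K : Finset V, K.card = k - 1 ∧ ∀ e ∈ S, K ⊆ e

/-- `S` is a maximal star subhypergraph of `E`. -/
def IsMaxStar (k : ℕ) (E S : Finset (Finset V)) : Prop :=
  IsStarSub k E S ∧ ∀ T, IsStarSub k E T → S ⊆ T → S = T


section AuxStmt8

variable {V : Type*} [DecidableEq V]

private lemma aux_take_sub {α : Type*} {m n : ℕ} (h : m ≤ n) (t : List α) :
    ∀ x ∈ t.take m, x ∈ t.take n := by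
  intro x hx
  have ht : t.take m = (t.take n).take m := by
    rw [List.take_take, min_eq_left h]
  rw [ht] at hx
  exact List.take_subset _ _ hx

private lemma aux_mem_windows {k : ℕ} {w : List V} {i : ℕ} (hi : i < w.length + 1 - k) :
    ((w.drop i).take k).toFinset ∈ windows k w :=
  List.mem_map_of_mem (List.mem_range.mpr hi)

private lemma aux_windows_ne {k : ℕ} {w : List V} (hnd : (windows k w).Nodup)
    {i j : ℕ} (hi : i < w.length + 1 - k) (hj : j < w.length + 1 - k) (hij : i ≠ j) :
    ((w.drop i).take k).toFinset ≠ ((w.drop j).take k).toFinset := by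
  intro h
  apply hij
  have hli : i < (windows k w).length := by simpa [windows] using hi
  have hlj : j < (windows k w).length := by simpa [windows] using hj
  have hgi : (windows k w)[i]'hli = ((w.drop i).take k).toFinset := by
    simp [windows]
  have hgj : (windows k w)[j]'hlj = ((w.drop j).take k).toFinset := by
    simp [windows]
  exact (List.Nodup.getElem_inj_iff hnd).mp (by rw [hgi, hgj]; exact h)

/-- Each edge of `E` contains a unique edge of the Steiner system `F`. -/
private lemma aux_uniqueF {k : ℕ} (hk : 3 ≤ k) {F : Finset (Finset V)}
    (hFu : ∀ f ∈ F, f.card = k - 1)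
    (hFst : ∀ s : Finset V, s.card = k - 2 → ∃! f, f ∈ F ∧ s ⊆ f)
    {e f f' : Finset V} (he : e.card = k) (hf : f ∈ F) (hf' : f' ∈ F)
    (hfe : f ⊆ e) (hf'e : f' ⊆ e) : f = f' := by
  by_contra hne
  have hcf := hFu f hf
  have hcf' := hFu f' hf'
  have hsub : ¬ f' ⊆ f := by
    intro h
    exact hne (Finset.eq_of_subset_of_card_le h (by omega)).symm
  have hcu1 : (f ∪ f').card ≤ k :=
    he ▸ Finset.card_le_card (Finset.union_subset hfe hf'e)
  have hne2 : f ≠ f ∪ f' := by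
    intro h
    exact hsub (by rw [h]; exact Finset.subset_union_right)
  have hcu2 : f.card < (f ∪ f').card :=
    Finset.card_lt_card (Finset.ssubset_iff_subset_ne.mpr ⟨Finset.subset_union_left, hne2⟩)
  have hci : (f ∩ f').card = k - 2 := by
    have := Finset.card_union_add_card_inter f f'
    omega
  obtain ⟨g, _, hgu⟩ := hFst (f ∩ f') hci
  exact hne ((hgu f ⟨hf, Finset.inter_subset_left⟩).trans
    (hgu f' ⟨hf', Finset.inter_subset_right⟩).symm)

/-- Two distinct edges of `E` sharing `k-1` vertices contain a common `F`-edge. -/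
private lemma aux_commonF {k : ℕ} (hk : 3 ≤ k) {F E : Finset (Finset V)}
    (hFu : ∀ f ∈ F, f.card = k - 1)
    (hFst : ∀ s : Finset V, s.card = k - 2 → ∃! f, f ∈ F ∧ s ⊆ f)
    (hEu : ∀ e ∈ E, e.card = k)
    (hext : ∀ e ∈ E, ∃ f ∈ F, f ⊆ e)
    (hnme : ¬ ∃ f₁ ∈ F, ∃ f₂ ∈ F, (f₁ ∩ f₂).card = k - 3 ∧
      ∃ v₁ ∈ f₁, ∃ v₂ ∈ f₂, insert v₂ f₁ ∈ E ∧ insert v₁ f₂ ∈ E)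
    {e e' : Finset V} (he : e ∈ E) (he' : e' ∈ E)
    (hS : (e ∩ e').card = k - 1) :
    ∃ f ∈ F, f ⊆ e ∧ f ⊆ e' := by
  obtain ⟨f, hf, hfe⟩ := hext e he
  obtain ⟨f', hf', hf'e⟩ := hext e' he'
  have hce := hEu e he
  have hce' := hEu e' he'
  have hcf := hFu f hf
  have hcf' := hFu f' hf'
  by_cases h1 : f ⊆ e'
  · exact ⟨f, hf, hfe, h1⟩
  by_cases h2 : f' ⊆ e
  · exact ⟨f', hf', h2, hf'e⟩
  exfalso
  obtain ⟨v, hvf, hve'⟩ := Finset.not_subset.mp h1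
  obtain ⟨v', hv'f', hv'e⟩ := Finset.not_subset.mp h2
  have hsd : (e \ e').card = 1 := by
    have := Finset.card_inter_add_card_sdiff e e'
    omega
  have hsd' : (e' \ e).card = 1 := by
    have := Finset.card_inter_add_card_sdiff e' e
    rw [Finset.inter_comm] at this
    omega
  have hcfd : (f \ e').card = 1 := by
    have hsub : f \ e' ⊆ e \ e' := Finset.sdiff_subset_sdiff hfe Finset.Subset.rfl
    have h1' : (f \ e').card ≤ 1 := hsd ▸ Finset.card_le_card hsub
    have h2' : 0 < (f \ e').card :=
      Finset.card_pos.mpr ⟨v, Finset.mem_sdiff.mpr ⟨hvf, hve'⟩⟩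
    omega
  have hcf'd : (f' \ e).card = 1 := by
    have hsub : f' \ e ⊆ e' \ e := Finset.sdiff_subset_sdiff hf'e Finset.Subset.rfl
    have h1' : (f' \ e).card ≤ 1 := hsd' ▸ Finset.card_le_card hsub
    have h2' : 0 < (f' \ e).card :=
      Finset.card_pos.mpr ⟨v', Finset.mem_sdiff.mpr ⟨hv'f', hv'e⟩⟩
    omega
  have hcA : (f ∩ e').card = k - 2 := by
    have := Finset.card_inter_add_card_sdiff f e'
    omega
  have hcA' : (f' ∩ e).card = k - 2 := by
    have := Finset.card_inter_add_card_sdiff f' e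
    omega
  have hAS : f ∩ e' ⊆ e ∩ e' := Finset.inter_subset_inter hfe Finset.Subset.rfl
  have hA'S : f' ∩ e ⊆ e ∩ e' := fun x hx =>
    Finset.mem_inter.mpr ⟨(Finset.mem_inter.mp hx).2, hf'e (Finset.mem_inter.mp hx).1⟩
  have hAA' : f ∩ e' ≠ f' ∩ e := by
    intro h
    obtain ⟨g, _, hgu⟩ := hFst (f ∩ e') hcA
    have e1 := hgu f ⟨hf, Finset.inter_subset_left⟩
    have e2 := hgu f' ⟨hf', by rw [h]; exact Finset.inter_subset_left⟩
    have hff' : f = f' := e1.trans e2.symm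
    exact hve' (hf'e (hff' ▸ hvf))
  have hcSA : ((e ∩ e') \ (f ∩ e')).card = 1 := by
    rw [Finset.card_sdiff_of_subset hAS]
    omega
  have hcSA' : ((e ∩ e') \ (f' ∩ e)).card = 1 := by
    rw [Finset.card_sdiff_of_subset hA'S]
    omega
  obtain ⟨a, ha⟩ := Finset.card_eq_one.mp hcSA
  obtain ⟨a', ha'⟩ := Finset.card_eq_one.mp hcSA'
  have hArec : f ∩ e' = (e ∩ e') \ {a} := by
    rw [← ha, Finset.sdiff_sdiff_eq_self hAS]
  have hA'rec : f' ∩ e = (e ∩ e') \ {a'} := by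
    rw [← ha', Finset.sdiff_sdiff_eq_self hA'S]
  have haS : a ∈ e ∩ e' := by
    have : a ∈ (e ∩ e') \ (f ∩ e') := by rw [ha]; exact Finset.mem_singleton_self a
    exact (Finset.mem_sdiff.mp this).1
  have ha'S : a' ∈ e ∩ e' := by
    have : a' ∈ (e ∩ e') \ (f' ∩ e) := by rw [ha']; exact Finset.mem_singleton_self a'
    exact (Finset.mem_sdiff.mp this).1
  have hanf : a ∉ f := by
    intro hcon
    have : a ∈ f ∩ e' := Finset.mem_inter.mpr ⟨hcon, (Finset.mem_inter.mp haS).2⟩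
    rw [hArec] at this
    exact (Finset.mem_sdiff.mp this).2 (Finset.mem_singleton_self a)
  have ha'nf' : a' ∉ f' := by
    intro hcon
    have : a' ∈ f' ∩ e := Finset.mem_inter.mpr ⟨hcon, (Finset.mem_inter.mp ha'S).1⟩
    rw [hA'rec] at this
    exact (Finset.mem_sdiff.mp this).2 (Finset.mem_singleton_self a')
  have hane : a ≠ a' := by
    intro h
    apply hAA'
    rw [hArec, hA'rec, h]
  have haf' : a ∈ f' := by
    have : a ∈ (e ∩ e') \ {a'} := Finset.mem_sdiff.mpr ⟨haS, by simp [hane]⟩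
    rw [← hA'rec] at this
    exact (Finset.mem_inter.mp this).1
  have ha'f : a' ∈ f := by
    have : a' ∈ (e ∩ e') \ {a} := Finset.mem_sdiff.mpr ⟨ha'S, by simp [Ne.symm hane]⟩
    rw [← hArec] at this
    exact (Finset.mem_inter.mp this).1
  have hea : insert a f = e := by
    apply Finset.eq_of_subset_of_card_le
    · exact Finset.insert_subset (Finset.mem_inter.mp haS).1 hfe
    · rw [Finset.card_insert_of_notMem hanf]
      omega
  have hea' : insert a' f' = e' := by
    apply Finset.eq_of_subset_of_card_le
    · exact Finset.insert_subset (Finset.mem_inter.mp ha'S).2 hf'e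
    · rw [Finset.card_insert_of_notMem ha'nf']
      omega
  have hpair : ({a, a'} : Finset V) ⊆ e ∩ e' := by
    intro x hx
    rcases Finset.mem_insert.mp hx with rfl | hx
    · exact haS
    · rw [Finset.mem_singleton.mp hx]; exact ha'S
  have hint : f ∩ f' = (e ∩ e') \ {a, a'} := by
    ext x
    simp only [Finset.mem_inter, Finset.mem_sdiff, Finset.mem_insert, Finset.mem_singleton]
    constructor
    · rintro ⟨hx1, hx2⟩
      refine ⟨⟨hfe hx1, hf'e hx2⟩, ?_⟩
      rintro (rfl | rfl)
      · exact hanf hx1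
      · exact ha'nf' hx2
    · rintro ⟨hxS, hxne⟩
      push_neg at hxne
      constructor
      · have hx : x ∈ (e ∩ e') \ {a} :=
          Finset.mem_sdiff.mpr ⟨Finset.mem_inter.mpr hxS, by simp [hxne.1]⟩
        rw [← hArec] at hx
        exact (Finset.mem_inter.mp hx).1
      · have hx : x ∈ (e ∩ e') \ {a'} :=
          Finset.mem_sdiff.mpr ⟨Finset.mem_inter.mpr hxS, by simp [hxne.2]⟩
        rw [← hA'rec] at hx
        exact (Finset.mem_inter.mp hx).1
  have hcint : (f ∩ f').card = k - 3 := by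
    rw [hint, Finset.card_sdiff_of_subset hpair, Finset.card_pair hane, hS]
    omega
  exact hnme ⟨f, hf, f', hf', hcint, a', ha'f, a, haf',
    by rw [hea]; exact he, by rw [hea']; exact he'⟩

/-- No three consecutive windows: any window list with at least three windows
in `E` is impossible. -/
private lemma aux_noThree {k : ℕ} (hk : 3 ≤ k) {F E : Finset (Finset V)}
    (hFu : ∀ f ∈ F, f.card = k - 1)
    (hFst : ∀ s : Finset V, s.card = k - 2 → ∃! f, f ∈ F ∧ s ⊆ f)
    (hEu : ∀ e ∈ E, e.card = k)
    (hext : ∀ e ∈ E, ∃ f ∈ F, f ⊆ e)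
    (hnme : ¬ ∃ f₁ ∈ F, ∃ f₂ ∈ F, (f₁ ∩ f₂).card = k - 3 ∧
      ∃ v₁ ∈ f₁, ∃ v₂ ∈ f₂, insert v₂ f₁ ∈ E ∧ insert v₁ f₂ ∈ E)
    {w : List V} (hlen : k + 2 ≤ w.length)
    (hcard : ∀ e ∈ windows k w, e.card = k)
    (hnd : (windows k w).Nodup)
    (hE : ∀ e ∈ windows k w, e ∈ E) : False := by
  obtain ⟨m, rfl⟩ : ∃ m, k = m + 3 := ⟨k - 3, by omega⟩
  rcases w with _ | ⟨a, _ | ⟨b, t⟩⟩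
  · simp at hlen
  · simp at hlen
  · have ht : m + 3 ≤ t.length := by
      simp only [List.length_cons] at hlen
      omega
    set e₀ := (((a :: b :: t).drop 0).take (m + 3)).toFinset with he₀
    set e₁ := (((a :: b :: t).drop 1).take (m + 3)).toFinset with he₁
    set e₂ := (((a :: b :: t).drop 2).take (m + 3)).toFinset with he₂
    have hNl : ∀ i, i < 3 → i < (a :: b :: t).length + 1 - (m + 3) := by
      intro i hi
      simp only [List.length_cons]
      omega
    have hm₀ : e₀ ∈ windows (m + 3) (a :: b :: t) := aux_mem_windows (hNl 0 (by norm_num))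
    have hm₁ : e₁ ∈ windows (m + 3) (a :: b :: t) := aux_mem_windows (hNl 1 (by norm_num))
    have hm₂ : e₂ ∈ windows (m + 3) (a :: b :: t) := aux_mem_windows (hNl 2 (by norm_num))
    have hne01 : e₀ ≠ e₁ := aux_windows_ne hnd (hNl 0 (by norm_num)) (hNl 1 (by norm_num)) (by norm_num)
    have hne12 : e₁ ≠ e₂ := aux_windows_ne hnd (hNl 1 (by norm_num)) (hNl 2 (by norm_num)) (by norm_num)
    have E₀ : e₀ = insert a (b :: t.take (m + 1)).toFinset := by
      rw [he₀]
      simp only [List.drop_zero]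
      rw [show m + 3 = (m + 2) + 1 from rfl, List.take_succ_cons,
        show m + 2 = (m + 1) + 1 from rfl, List.take_succ_cons, List.toFinset_cons]
    have E₁ : e₁ = insert b (t.take (m + 2)).toFinset := by
      rw [he₁]
      rw [show ((a :: b :: t).drop 1) = b :: t from rfl,
        show m + 3 = (m + 2) + 1 from rfl, List.take_succ_cons, List.toFinset_cons]
    have E₂ : e₂ = (t.take (m + 3)).toFinset := by
      rw [he₂, show ((a :: b :: t).drop 2) = t from rfl]
    have hc₀ : e₀.card = m + 3 := hcard _ hm₀
    have hc₁ : e₁.card = m + 3 := hcard _ hm₁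
    have hc₂ : e₂.card = m + 3 := hcard _ hm₂
    -- the two candidate kernels
    set T₁ : Finset V := (b :: t.take (m + 1)).toFinset with hT₁def
    set T₂ : Finset V := (t.take (m + 2)).toFinset with hT₂def
    have hcT₁le : T₁.card ≤ m + 2 := by
      rw [hT₁def]
      refine le_trans (List.toFinset_card_le _) ?_
      simp only [List.length_cons, List.length_take]
      omega
    have hcT₂le : T₂.card ≤ m + 2 := by
      rw [hT₂def]
      refine le_trans (List.toFinset_card_le _) ?_
      simp only [List.length_take]
      omega
    have hcT₁ : T₁.card = m + 2 := by
      have h1 : e₀.card ≤ T₁.card + 1 := by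
        rw [E₀]; exact Finset.card_insert_le _ _
      omega
    have hcT₂ : T₂.card = m + 2 := by
      have h1 : e₁.card ≤ T₂.card + 1 := by
        rw [E₁]; exact Finset.card_insert_le _ _
      omega
    have hbT₂ : b ∉ T₂ := by
      intro h
      rw [E₁, Finset.insert_eq_self.mpr h] at hc₁
      omega
    have hbT₁ : b ∈ T₁ := by
      rw [hT₁def]
      simp
    -- T₁ ⊆ e₁ and T₂ ⊆ e₂
    have hT₁e₁ : T₁ ⊆ e₁ := by
      intro x hx
      rw [hT₁def, List.toFinset_cons, Finset.mem_insert] at hx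
      rw [E₁, Finset.mem_insert]
      rcases hx with rfl | hx
      · exact Or.inl rfl
      · right
        rw [List.mem_toFinset] at hx ⊢
        exact aux_take_sub (by omega) t x hx
    have hT₂e₂ : T₂ ⊆ e₂ := by
      intro x hx
      rw [E₂]
      rw [hT₂def, List.mem_toFinset] at hx
      rw [List.mem_toFinset]
      exact aux_take_sub (by omega) t x hx
    have hT₁e₀ : T₁ ⊆ e₀ := by
      rw [E₀]; exact Finset.subset_insert _ _
    have hT₂e₁ : T₂ ⊆ e₁ := by
      rw [E₁]; exact Finset.subset_insert _ _
    -- intersections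
    have hI01 : e₀ ∩ e₁ = T₁ := by
      have hsub : T₁ ⊆ e₀ ∩ e₁ := Finset.subset_inter hT₁e₀ hT₁e₁
      have hle : (e₀ ∩ e₁).card ≤ m + 2 := by
        by_contra hgt
        push_neg at hgt
        have h2 : e₀ ⊆ e₁ := by
          rw [← Finset.eq_of_subset_of_card_le
            (Finset.inter_subset_left : e₀ ∩ e₁ ⊆ e₀) (by omega)]
          exact Finset.inter_subset_right
        exact hne01 (Finset.eq_of_subset_of_card_le h2 (by omega))
      exact (Finset.eq_of_subset_of_card_le hsub (by omega)).symm
    have hI12 : e₁ ∩ e₂ = T₂ := by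
      have hsub : T₂ ⊆ e₁ ∩ e₂ := Finset.subset_inter hT₂e₁ hT₂e₂
      have hle : (e₁ ∩ e₂).card ≤ m + 2 := by
        by_contra hgt
        push_neg at hgt
        have h2 : e₁ ⊆ e₂ := by
          rw [← Finset.eq_of_subset_of_card_le
            (Finset.inter_subset_left : e₁ ∩ e₂ ⊆ e₁) (by omega)]
          exact Finset.inter_subset_right
        exact hne12 (Finset.eq_of_subset_of_card_le h2 (by omega))
      exact (Finset.eq_of_subset_of_card_le hsub (by omega)).symm
    -- common F-edges
    obtain ⟨f, hfF, hfe₀, hfe₁⟩ := aux_commonF hk hFu hFst hEu hext hnme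
      (hE _ hm₀) (hE _ hm₁) (by rw [hI01]; omega)
    obtain ⟨g, hgF, hge₁, hge₂⟩ := aux_commonF hk hFu hFst hEu hext hnme
      (hE _ hm₁) (hE _ hm₂) (by rw [hI12]; omega)
    have hfT₁ : f = T₁ := by
      apply Finset.eq_of_subset_of_card_le
      · rw [← hI01]; exact Finset.subset_inter hfe₀ hfe₁
      · have := hFu f hfF
        omega
    have hgT₂ : g = T₂ := by
      apply Finset.eq_of_subset_of_card_le
      · rw [← hI12]; exact Finset.subset_inter hge₁ hge₂
      · have := hFu g hgF
        omega
    have hTT : T₁ = T₂ := by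
      rw [← hfT₁, ← hgT₂]
      exact aux_uniqueF hk hFu hFst hc₁ hfF hgF hfe₁ hge₁
    rw [hTT] at hbT₁
    exact hbT₂ hbT₁

end AuxStmt8

/-- Extension lemma: a chain-connected extension of an
`S(k-2, k-1, n)` Steiner system without mutually extended edges is a
`k`-uniform 2-hypertree. -/
theorem stmt8 {V : Type*} [Fintype V] [DecidableEq V] (n k : ℕ) (hk : 3 ≤ k)
    (hn : Fintype.card V = n)
    (F : Finset (Finset V)) (hFu : ∀ f ∈ F, f.card = k - 1)
    (hFst : ∀ s : Finset V, s.card = k - 2 → ∃! f, f ∈ F ∧ s ⊆ f)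
    (E : Finset (Finset V)) (hEu : ∀ e ∈ E, e.card = k)
    (hext : ∀ e ∈ E, ∃ f ∈ F, f ⊆ e)
    (hcc : ChainConn k E)
    (hnme : ¬ ∃ f₁ ∈ F, ∃ f₂ ∈ F, (f₁ ∩ f₂).card = k - 3 ∧
      ∃ v₁ ∈ f₁, ∃ v₂ ∈ f₂, insert v₂ f₁ ∈ E ∧ insert v₁ f₂ ∈ E) :
    IsLHypertree k 2 E := by
  refine ⟨⟨hEu, hcc, ?_⟩, ?_⟩
  · -- SemicycleFree
    rintro ⟨w, ⟨hkl, hhl, hcard, hnd⟩, hE⟩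
    rcases Nat.lt_or_ge w.length (k + 2) with hl2 | hl2
    · rcases Nat.lt_or_ge w.length (k + 1) with hl1 | hl1
      · -- length = k : the single window forces w nodup, so head ≠ last
        have hlk : w.length = k := le_antisymm (by omega) hkl
        have hwmem : w.toFinset ∈ windows k w := by
          have h0 := aux_mem_windows (k := k) (w := w) (i := 0) (by omega)
          rwa [List.drop_zero, List.take_of_length_le (le_of_eq hlk)] at h0
        have hnodup : w.Nodup := by
          have hcw : w.toFinset.card = w.length := by rw [hcard _ hwmem, hlk]
          rw [List.card_toFinset] at hcw
          exact List.dedup_eq_self.mp (List.Sublist.eq_of_length (List.dedup_sublist w) hcw)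
        rcases w with _ | ⟨x, xs⟩
        · simp at hlk; omega
        · have hxs : xs ≠ [] := by
            intro h
            rw [h] at hlk
            simp at hlk
            omega
          have hlast : (x :: xs).getLast? = some (xs.getLast hxs) := by
            rw [List.getLast?_eq_getLast_of_ne_nil (List.cons_ne_nil x xs),
              List.getLast_cons hxs]
          rw [List.head?_cons, hlast, Option.some_inj] at hhl
          have : x ∈ xs := hhl ▸ List.getLast_mem hxs
          exact (List.nodup_cons.mp hnodup).1 this
      · -- length = k + 1 : the two windows coincide
        obtain ⟨m, rfl⟩ : ∃ m, k = m + 3 := ⟨k - 3, by omega⟩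
        have hlk : w.length = m + 4 := by omega
        rcases w with _ | ⟨a, w₁⟩
        · simp at hlk
        · have hw₁ : w₁.length = m + 3 := by
            simp only [List.length_cons] at hlk
            omega
          have hw₁ne : w₁ ≠ [] := by
            intro h
            rw [h] at hw₁
            simp at hw₁
          have hNl : ∀ i, i < 2 → i < (a :: w₁).length + 1 - (m + 3) := by
            intro i hi
            simp only [List.length_cons]
            omega
          have hm₀ := aux_mem_windows (k := m + 3) (w := a :: w₁) (i := 0) (hNl 0 (by norm_num))
          have hm₁ := aux_mem_windows (k := m + 3) (w := a :: w₁) (i := 1) (hNl 1 (by norm_num))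
          have hne01 := aux_windows_ne (k := m + 3) hnd (hNl 0 (by norm_num))
            (hNl 1 (by norm_num)) (by norm_num)
          apply hne01
          have E₀ : (((a :: w₁).drop 0).take (m + 3)).toFinset
              = insert a (w₁.take (m + 2)).toFinset := by
            rw [List.drop_zero, show m + 3 = (m + 2) + 1 from rfl, List.take_succ_cons,
              List.toFinset_cons]
          have E₁ : (((a :: w₁).drop 1).take (m + 3)).toFinset = w₁.toFinset := by
            rw [show ((a :: w₁).drop 1) = w₁ from rfl, List.take_of_length_le (le_of_eq hw₁)]
          -- the first vertex equals the last, which lies in w₁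
          have haw₁ : a ∈ w₁ := by
            have hlast : (a :: w₁).getLast? = some (w₁.getLast hw₁ne) := by
              rw [List.getLast?_eq_getLast_of_ne_nil (List.cons_ne_nil a w₁),
                List.getLast_cons hw₁ne]
            rw [List.head?_cons, hlast, Option.some_inj] at hhl
            exact hhl ▸ List.getLast_mem hw₁ne
          have hsub : (((a :: w₁).drop 0).take (m + 3)).toFinset
              ⊆ (((a :: w₁).drop 1).take (m + 3)).toFinset := by
            rw [E₀, E₁]
            apply Finset.insert_subset
            · exact List.mem_toFinset.mpr haw₁
            · intro x hx
              rw [List.mem_toFinset] at hx ⊢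
              exact List.take_subset _ _ hx
          exact Finset.eq_of_subset_of_card_le hsub
            (by rw [hcard _ hm₀, hcard _ hm₁])
    · exact aux_noThree hk hFu hFst hEu hext hnme hl2 hcard hnd hE
  · -- ChainsLenLE
    intro w hw hE
    by_contra hgt
    push_neg at hgt
    exact aux_noThree hk hFu hFst hEu hext hnme (by omega) hw.2.2.1 hw.2.2.2 hE
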